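/- For all natural numbers m, N ≥ 1: ∑_{n=0}^{m-1} (-1;q)_n q^n / (-q^N;q)_{n+1} = (1/(1-q^N)) ( (-1;q)_m/(-q^N;q)_m − 1 ). -/

import Mathlib

open Finset

/-- q-Pochhammer symbol (a;q)_n = ∏_{k=0}^{n-1} (1 - a q^k). -/
noncomputable def qP (a q : ℂ) (n : ℕ) : ℂ := ∏ k ∈ Finset.range n, (1 - a * q ^ k)

/-- Gaussian (q-)binomial coefficient [N choose n]_q. -/
noncomputable def qBinom (q : ℂ) (N n : ℕ) : ℂ := qP q q N / (qP q q n * qP q q (N - n))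

lemma qP_succ (a q : ℂ) (n : ℕ) : qP a q (n + 1) = qP a q n * (1 - a * q ^ n) := by
  simp [qP, Finset.prod_range_succ]

lemma fac_ne (q : ℂ) (hq : ‖q‖ < 1) (N k : ℕ) (hN : 1 ≤ N) :
    (1 : ℂ) - (-(q ^ N)) * q ^ k ≠ 0 := by
  intro h0
  have hx : (-(q ^ N)) * q ^ k = 1 := by linear_combination -h0
  have h : ‖(-(q ^ N)) * q ^ k‖ < 1 := by
    rw [norm_mul, norm_neg, norm_pow, norm_pow, ← pow_add]
    exact pow_lt_one₀ (norm_nonneg _) hq (by omega)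
  rw [hx] at h
  simp at h

lemma qP_ne (q : ℂ) (hq : ‖q‖ < 1) (N n : ℕ) (hN : 1 ≤ N) :
    qP (-(q ^ N)) q n ≠ 0 := by
  unfold qP
  exact Finset.prod_ne_zero_iff.mpr fun k _ => fac_ne q hq N k hN

lemma one_sub_ne (q : ℂ) (hq : ‖q‖ < 1) (N : ℕ) (hN : 1 ≤ N) :
    (1 : ℂ) - q ^ N ≠ 0 := by
  intro h0
  have hx : q ^ N = 1 := by linear_combination -h0
  have h : ‖q ^ N‖ < 1 := by
    rw [norm_pow]; exact pow_lt_one₀ (norm_nonneg _) hq (by omega)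
  rw [hx] at h; simp at h

theorem stmt_11 (m N : ℕ) (hm : 1 ≤ m) (hN : 1 ≤ N) (q : ℂ) (hq : ‖q‖ < 1) :
    ∑ n ∈ Finset.range m, qP (-1) q n * q ^ n / qP (-(q ^ N)) q (n + 1) =
      (1 / (1 - q ^ N)) * (qP (-1) q m / qP (-(q ^ N)) q m - 1) := by
  induction m, hm using Nat.le_induction with
  | base =>
    have h1 := fac_ne q hq N 0 hN
    have h2 := one_sub_ne q hq N hN
    simp only [Finset.sum_range_one, qP_succ, qP]
    simp only [Finset.prod_range_zero, Finset.prod_range_one]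
    have h1' : (1 : ℂ) + q ^ N ≠ 0 := by
      intro h; apply h1; rw [pow_zero]; linear_combination h
    simp only [zero_add, Finset.prod_range_one, pow_zero, mul_one]
    field_simp
    ring_nf
    have e : (1 + q ^ N)⁻¹ * (1 + q ^ N) = 1 := inv_mul_cancel₀ h1'
    linear_combination (-1 : ℂ) * e
  | succ k hk ih =>
    rw [Finset.sum_range_succ, ih, qP_succ, qP_succ]
    have h1 := fac_ne q hq N k hN
    have h2 := one_sub_ne q hq N hN
    have h3 := qP_ne q hq N k hN
    have h1' : (1 : ℂ) + q ^ N * q ^ k ≠ 0 := by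
      intro h; apply h1; linear_combination h
    field_simp
    ring_nf
    field_simp
    ring
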